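/- With the setup of the $2\times 2$ Toda flow (off-diagonal entry $m_{12}(t) = (\lambda_1-\lambda_2) \frac{e^{t(\lambda_2-\lambda_1)}\tan\theta_0}{1+e^{2t(\lambda_2-\lambda_1)}\tan^2\theta_0}$, $\lambda_1 > \lambda_2$, $\theta_0 \in (0,\pi/2)$), suppose $0 < \epsilon < m_{12}(0)$ and $2\epsilon < \lambda_1 - \lambda_2$. Then the deflation time $\tau_\epsilon = \inf\{t > 0 : m_{12}(t) < \epsilon\}$ satisfies $(\lambda_1-\lambda_2)\tau_\epsilon = \log\tan\theta_0 - \log\left[\frac{\lambda_1-\lambda_2}{2\epsilon} - \sqrt{\frac{(\lambda_1-\lambda_2)^2}{4\epsilon^2} - 1}\right]$. -/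
import Mathlib

open Real

set_option maxHeartbeats 2000000 in
/-- Deflation time formula for the 2×2 Toda flow. -/
theorem toda_2x2_deflation_time_formula
    (lam₁ lam₂ θ₀ ε : ℝ) (hlam : lam₂ < lam₁)
    (hθ₀ : θ₀ ∈ Set.Ioo 0 (π / 2))
    (m₁₂ : ℝ → ℝ)
    (hm : ∀ t : ℝ, m₁₂ t =
      (lam₁ - lam₂) * (Real.exp (t * (lam₂ - lam₁)) * Real.tan θ₀) /
        (1 + Real.exp (2 * t * (lam₂ - lam₁)) * Real.tan θ₀ ^ 2))
    (hε : 0 < ε) (hε₁ : ε < m₁₂ 0) (hε₂ : 2 * ε < lam₁ - lam₂) :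
    (lam₁ - lam₂) * sInf {t : ℝ | 0 < t ∧ m₁₂ t < ε} =
      Real.log (Real.tan θ₀) -
        Real.log ((lam₁ - lam₂) / (2 * ε) -
          Real.sqrt ((lam₁ - lam₂) ^ 2 / (4 * ε ^ 2) - 1)) := by
  set δ := lam₁ - lam₂ with hδdef
  have hδ : 0 < δ := by simp only [hδdef]; linarith
  have hT : 0 < Real.tan θ₀ := Real.tan_pos_of_pos_of_lt_pi_div_two hθ₀.1 hθ₀.2
  set T := Real.tan θ₀ with hTdef
  clear_value δ T
  set s := Real.sqrt (δ ^ 2 / (4 * ε ^ 2) - 1) with hsdef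
  have hnn : 0 ≤ δ ^ 2 / (4 * ε ^ 2) - 1 := by
    rw [sub_nonneg, le_div_iff₀ (by positivity)]
    nlinarith
  have hs2 : s ^ 2 = δ ^ 2 / (4 * ε ^ 2) - 1 := Real.sq_sqrt hnn
  have hs0 : 0 ≤ s := Real.sqrt_nonneg _
  set r := δ / (2 * ε) - s with hrdef
  set r' := δ / (2 * ε) + s with hr'def
  clear_value s r r'
  have hrr' : r * r' = 1 := by
    rw [hrdef, hr'def]
    have : (δ / (2 * ε)) ^ 2 = δ ^ 2 / (4 * ε ^ 2) := by
      field_simp; ring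
    nlinarith [hs2]
  have hr'pos : 0 < r' := by rw [hr'def]; positivity
  have hrpos : 0 < r := by nlinarith [hrr']
  have hsum : r + r' = δ / ε := by
    rw [hrdef, hr'def]; field_simp; ring
  have hquad : ∀ u : ℝ, ε * u ^ 2 - δ * u + ε = ε * (u - r) * (u - r') := by
    intro u
    have hδε : δ = ε * (r + r') := by
      rw [hsum]; field_simp
    rw [hδε]; nlinarith [hrr']
  -- condition at t = 0
  have hm0 : ε * (1 + T ^ 2) < δ * T := by
    have h0 := hε₁
    rw [hm 0] at h0
    simp only [zero_mul, mul_zero, Real.exp_zero, one_mul] at h0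
    have hden : (0:ℝ) < 1 + T ^ 2 := by positivity
    rw [lt_div_iff₀ hden] at h0
    linarith
  have hfactT : ε * (T - r) * (T - r') < 0 := by
    have := hquad T
    nlinarith
  have hs2' : s ^ 2 * (4 * ε ^ 2) = δ ^ 2 - 4 * ε ^ 2 := by
    rw [hs2]; field_simp
  have hrr'lt : r < r' := by
    have hspos : 0 < s := by
      rcases lt_or_eq_of_le hs0 with h | h
      · exact h
      · exfalso
        rw [← h] at hs2'
        norm_num at hs2'
        nlinarith
    rw [hrdef, hr'def]; linarith
  have hrT : r < T := by
    by_contra h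
    push_neg at h
    have h1 : 0 ≤ r - T := by linarith
    have h2 : 0 ≤ r' - T := by linarith
    have := mul_nonneg (mul_nonneg hε.le h1) h2
    nlinarith [hfactT]
  have hTr' : T < r' := by
    by_contra h
    push_neg at h
    have h1 : 0 ≤ T - r := by linarith
    have h2 : 0 ≤ T - r' := by linarith
    have := mul_nonneg (mul_nonneg hε.le h1) h2
    linarith [hfactT]
  set τ := (Real.log T - Real.log r) / δ with hτdef
  clear_value τ
  have hτpos : 0 < τ := by
    have : Real.log r < Real.log T := Real.log_lt_log hrpos hrT
    rw [hτdef]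
    exact div_pos (by linarith) hδ
  -- characterize m₁₂ t < ε
  have hmlt : ∀ t : ℝ, m₁₂ t < ε ↔
      0 < ε * (Real.exp (-(δ * t)) * T - r) * (Real.exp (-(δ * t)) * T - r') := by
    intro t
    set u := Real.exp (-(δ * t)) * T with hudef
    have hupos : 0 < u := by positivity
    have harg : t * (lam₂ - lam₁) = -(δ * t) := by rw [hδdef]; ring
    have he : Real.exp (-(δ * t)) ^ 2 = Real.exp (2 * t * (lam₂ - lam₁)) := by
      rw [sq, ← Real.exp_add]
      congr 1
      rw [hδdef]; ring
    have harg2 : Real.exp (2 * t * (lam₂ - lam₁)) * T ^ 2 = u ^ 2 := by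
      rw [hudef, mul_pow, he]
    have hmt : m₁₂ t = δ * u / (1 + u ^ 2) := by
      rw [hm t, harg2, harg, hudef]
    have hden : (0:ℝ) < 1 + u ^ 2 := by positivity
    rw [hmt, div_lt_iff₀ hden]
    constructor
    · intro h
      have := hquad u
      nlinarith
    · intro h
      have := hquad u
      nlinarith
  -- the set equals Ioi τ
  have hset : {t : ℝ | 0 < t ∧ m₁₂ t < ε} = Set.Ioi τ := by
    ext t
    simp only [Set.mem_setOf_eq, Set.mem_Ioi]
    constructor
    · rintro ⟨ht, hlt⟩
      rw [hmlt t] at hlt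
      set u := Real.exp (-(δ * t)) * T with hudef
      have huT : u < T := by
        rw [hudef]
        have : Real.exp (-(δ * t)) < 1 := by
          rw [Real.exp_lt_one_iff]
          nlinarith
        nlinarith
      have hur : u < r := by
        by_contra hcon
        push_neg at hcon
        have h1 : 0 ≤ ε * (u - r) := mul_nonneg hε.le (by linarith)
        have h2 : u - r' ≤ 0 := by linarith
        have := mul_nonpos_of_nonneg_of_nonpos h1 h2
        linarith
      have hexp : Real.exp (-(δ * t)) < r / T := by
        rw [hudef] at hur
        rw [lt_div_iff₀ hT]
        exact hur
      have hlog : -(δ * t) < Real.log (r / T) := by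
        rw [← Real.log_exp (-(δ * t))]
        exact Real.log_lt_log (Real.exp_pos _) hexp
      rw [Real.log_div (ne_of_gt hrpos) (ne_of_gt hT)] at hlog
      rw [hτdef, div_lt_iff₀ hδ]
      linarith
    · intro ht
      have ht0 : 0 < t := lt_trans hτpos ht
      refine ⟨ht0, ?_⟩
      rw [hmlt t]
      set u := Real.exp (-(δ * t)) * T with hudef
      have hur : u < r := by
        have h1 : -(δ * t) < Real.log r - Real.log T := by
          rw [hτdef, div_lt_iff₀ hδ] at ht
          linarith
        have h2 : Real.exp (-(δ * t)) < r / T := by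
          calc Real.exp (-(δ * t)) < Real.exp (Real.log r - Real.log T) :=
                Real.exp_lt_exp.mpr h1
            _ = r / T := by
                rw [Real.exp_sub, Real.exp_log hrpos, Real.exp_log hT]
        rw [hudef]
        calc Real.exp (-(δ * t)) * T < (r / T) * T := by nlinarith
          _ = r := by field_simp
      have hupos : 0 < u := by rw [hudef]; positivity
      have hur' : u < r' := lt_trans hur hrr'lt
      have h1 : 0 < r - u := by linarith
      have h2 : 0 < r' - u := by linarith
      nlinarith [mul_pos (mul_pos hε h1) h2]
  rw [hset, csInf_Ioi, hτdef, mul_comm, div_mul_cancel₀ _ (ne_of_gt hδ)]
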